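/- arXiv:1501.04511 — 3 statements merged into one kernel-verified Lean document; each statement's English description precedes it below -/
import Mathlib

section
/- In any sequence of ADD and FETCH operations performed on a Q-store starting from the empty Q-store, if at the end every element of the Q-store has been accessed (f(i).ACCESSED = + for all i), then the Q-store behaved as a queue: the FETCH operations returned the added symbols in first-in-first-out order, i.e. each FETCH accessed the earliest unaccessed element of the store. -/
/-! ### Q-stores over an alphabet `S`.  An entry records a symbol (the initial
dummy symbol `†` is `none`), an ACCESSED flag and a MARKED flag. -/

abbrev QEntry (S : Type) := Option S × Bool × Bool

abbrev QStore (S : Type) := List (QEntry S)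

/-- The empty Q-store: a single dummy entry, accessed but unmarked. -/
def emptyQStore (S : Type) : QStore S := [(none, true, false)]

/-- Events on a Q-store: `add x`, or `fetch i j` which accesses the unaccessed
element `i`, witnessed by an earlier accessed-but-unmarked element `j`. -/
inductive QEvt (S : Type)
  | add : S → QEvt S
  | fetch : ℕ → ℕ → QEvt S

/-- Single steps on a Q-store: ADD appends an unaccessed, unmarked entry;
FETCH chooses `i` unaccessed with some `j < i` accessed and unmarked, and sets
`i` to accessed and `j` to marked. -/
inductive QStep {S : Type} : QStore S → QEvt S → QStore S → Prop
  | add {s : QStore S} {x : S} : QStep s (.add x) (s ++ [(some x, false, false)])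
  | fetch {s : QStore S} {i j : ℕ} {e e' : QEntry S} :
      j < i → i < s.length →
      s[i]? = some e → e.2.1 = false →
      s[j]? = some e' → e'.2.1 = true → e'.2.2 = false →
      QStep s (.fetch i j) ((s.set i (e.1, true, e.2.2)).set j (e'.1, true, true))

/-- Runs of a sequence of ADD/FETCH operations on a Q-store. -/
inductive QRun {S : Type} : QStore S → List (QEvt S) → QStore S → Prop
  | nil {s : QStore S} : QRun s [] s
  | cons {s s' s'' : QStore S} {e : QEvt S} {es : List (QEvt S)} :
      QStep s e s' → QRun s' es s'' → QRun s (e :: es) s''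

/-! ### Auxiliary machinery -/

/-- Invariant: `p` lists (in increasing order) exactly the accessed positions,
and the marked positions are exactly those of `p` except the last. -/
def QInv {S : Type} (s : QStore S) (p : List ℕ) : Prop :=
  p.Pairwise (· < ·) ∧ (∀ k ∈ p, k < s.length) ∧
  ∀ k e, s[k]? = some e →
    ((e.2.1 = true ↔ k ∈ p) ∧ (e.2.2 = true ↔ k ∈ p.dropLast))

lemma qinv_empty (S : Type) : QInv (emptyQStore S) [0] := by
  refine ⟨by simp, by simp [emptyQStore], ?_⟩
  intro k e h
  match k with
  | 0 => simp [emptyQStore] at h; subst h; simp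
  | k+1 => simp [emptyQStore] at h

/-- The extension of the path by an event. -/
def evtExt {S : Type} : QEvt S → List ℕ
  | .add _ => []
  | .fetch i _ => [i]

lemma qinv_step {S : Type} {s s' : QStore S} {ev : QEvt S} {p : List ℕ}
    (hst : QStep s ev s') (hinv : QInv s p) : QInv s' (p ++ evtExt ev) := by
  obtain ⟨hsort, hbd, hent⟩ := hinv
  cases hst with
  | @add x =>
    simp only [evtExt, List.append_nil]
    refine ⟨hsort, ?_, ?_⟩
    · intro k hk
      have := hbd k hk
      simp only [List.length_append, List.length_cons, List.length_nil]
      omega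
    · intro k e h
      rcases lt_or_ge k s.length with hk | hk
      · rw [List.getElem?_append_left hk] at h
        exact hent k e h
      · rcases eq_or_lt_of_le hk with hk' | hk'
        · rw [List.getElem?_append_right hk, ← hk'] at h
          simp at h
          subst h
          have hnp : k ∉ p := fun hm => absurd (hbd k hm) (by omega)
          constructor
          · simp [hnp]
          · simp
            intro hm
            exact hnp (List.dropLast_sublist p |>.mem hm)
        · rw [List.getElem?_eq_none (by simp; omega)] at h
          exact absurd h (by simp)
  | fetch hji hil hgi hei hgj hej1 hej2 =>
    rename_i i j e e'
    have hij : i ≠ j := (by omega)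
    have hjp : j ∈ p := (hent j e' hgj).1.mp hej1
    have hjd : j ∉ p.dropLast := fun hm => by
      have := (hent j e' hgj).2.mpr hm
      simp [hej2] at this
    have hip : i ∉ p := fun hm => by
      have := (hent i e hgi).1.mpr hm
      simp [hei] at this
    have hpne : p ≠ [] := List.ne_nil_of_mem hjp
    have hdec : p.dropLast ++ [p.getLast hpne] = p := List.dropLast_append_getLast hpne
    have hjlast : p.getLast hpne = j := by
      have hjp' : j ∈ p.dropLast ++ [p.getLast hpne] := by rw [hdec]; exact hjp
      rcases List.mem_append.mp hjp' with hm | hm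
      · exact absurd hm hjd
      · simp at hm; exact hm.symm
    have hlast_lt : ∀ a ∈ p, a < i := by
      intro a ha
      have ha' : a ∈ p.dropLast ++ [p.getLast hpne] := by rw [hdec]; exact ha
      rcases List.mem_append.mp ha' with hm | hm
      · have hps : List.Pairwise (· < ·) (p.dropLast ++ [p.getLast hpne]) := by
          rw [hdec]; exact hsort
        have := (List.pairwise_append.mp hps).2.2 a hm (p.getLast hpne) (by simp)
        omega
      · simp at hm; subst hm; rw [hjlast]; exact hji
    have hjl : j < s.length := by omega
    simp only [evtExt]
    have hdl : (p ++ [i]).dropLast = p := List.dropLast_concat ..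
    refine ⟨?_, ?_, ?_⟩
    · refine List.pairwise_append.mpr ⟨hsort, by simp, ?_⟩
      intro a ha b hb; simp at hb; subst hb; exact hlast_lt a ha
    · intro k hk
      simp only [List.length_set]
      rcases List.mem_append.mp hk with hm | hm
      · exact hbd k hm
      · simp at hm; omega
    · intro k e₂ h
      rw [hdl]
      by_cases hkj : k = j
      · subst hkj
        rw [List.getElem?_set_self (by simpa using hjl)] at h
        injection h with h; subst h
        constructor
        · simp [List.mem_append, hjp]
        · simp [hjp]
      · rw [List.getElem?_set_ne (Ne.symm hkj)] at h
        by_cases hki : k = i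
        · subst hki
          rw [List.getElem?_set_self hil] at h
          injection h with h; subst h
          constructor
          · simp
          · constructor
            · intro hm
              exact absurd ((hent _ _ hgi).2.mp hm)
                (fun hm2 => hip ((List.dropLast_sublist p).mem hm2))
            · intro hm; exact absurd hm hip
        · rw [List.getElem?_set_ne (Ne.symm hki)] at h
          have h1 := (hent k e₂ h).1
          have h2 := (hent k e₂ h).2
          constructor
          · rw [h1, List.mem_append]
            simp [hki]
          · rw [h2]
            constructor
            · intro hm; exact (List.dropLast_sublist p).mem hm
            · intro hm
              have hm' : k ∈ p.dropLast ++ [p.getLast hpne] := by rw [hdec]; exact hm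
              rcases List.mem_append.mp hm' with hm'' | hm''
              · exact hm''
              · simp [hjlast] at hm''; exact absurd hm'' hkj

lemma qinv_run {S : Type} {s s' : QStore S} {evs : List (QEvt S)} {p : List ℕ}
    (hr : QRun s evs s') (hinv : QInv s p) : ∃ q, QInv s' (p ++ q) := by
  induction hr generalizing p with
  | nil => exact ⟨[], by simpa⟩
  | cons hst _ ih =>
    obtain ⟨q, hq⟩ := ih (qinv_step hst hinv)
    exact ⟨_ ++ q, by rwa [← List.append_assoc]⟩

lemma qstep_det {S : Type} {s t₁ t₂ : QStore S} {e : QEvt S}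
    (h₁ : QStep s e t₁) (h₂ : QStep s e t₂) : t₁ = t₂ := by
  cases h₁ with
  | add => cases h₂; rfl
  | fetch _ _ hgi _ hgj _ _ =>
    cases h₂ with
    | fetch _ _ hgi' _ hgj' _ _ =>
      rw [hgi] at hgi'; rw [hgj] at hgj'
      injection hgi' with h1; injection hgj' with h2
      rw [h1, h2]

lemma qrun_det {S : Type} {s t₁ t₂ : QStore S} {evs : List (QEvt S)}
    (h₁ : QRun s evs t₁) (h₂ : QRun s evs t₂) : t₁ = t₂ := by
  induction evs generalizing s with
  | nil => cases h₁; cases h₂; rfl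
  | cons e es ih =>
    cases h₁ with | cons hst₁ hr₁ =>
    cases h₂ with | cons hst₂ hr₂ =>
    rw [qstep_det hst₁ hst₂] at hr₁
    exact ih hr₁ hr₂

lemma qrun_split {S : Type} {s t : QStore S} {pre evs : List (QEvt S)}
    (h : QRun s (pre ++ evs) t) : ∃ u, QRun s pre u ∧ QRun u evs t := by
  induction pre generalizing s with
  | nil => exact ⟨s, .nil, h⟩
  | cons e es ih =>
    cases h with | cons hst hr =>
    obtain ⟨u, h1, h2⟩ := ih hr
    exact ⟨u, .cons hst h1, h2⟩

lemma sorted_full_eq_range {p : List ℕ} {n : ℕ} (hs : p.Pairwise (· < ·))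
    (hb : ∀ k ∈ p, k < n) (hf : ∀ k < n, k ∈ p) : p = List.range n := by
  haveI : IsAntisymm ℕ (· < ·) := ⟨fun a b h1 h2 => absurd h2 (not_lt.2 h1.le)⟩
  refine List.Perm.eq_of_pairwise (fun a b _ _ h1 h2 => absurd h2 (not_lt.2 h1.le)) hs List.pairwise_lt_range ?_
  refine (List.perm_ext_iff_of_nodup hs.nodup List.nodup_range).2 fun k => ?_
  simp only [List.mem_range]
  exact ⟨hb k, hf k⟩

/-- In any sequence of ADD and FETCH operations on a Q-store
starting from the empty Q-store, if at the end every element of the Q-store has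
been accessed, then the Q-store behaved as a queue: each FETCH accessed the
earliest unaccessed element of the store. -/
theorem qstore_all_accessed_implies_fifo (S : Type)
    (evs : List (QEvt S)) (sf : QStore S)
    (hrun : QRun (emptyQStore S) evs sf)
    (hall : ∀ e ∈ sf, e.2.1 = true) :
    ∀ (pre : List (QEvt S)) (i j : ℕ) (post : List (QEvt S)) (t : QStore S),
      evs = pre ++ QEvt.fetch i j :: post →
      QRun (emptyQStore S) pre t →
      ∀ i', i' < i → ∃ e ∈ t[i']?, e.2.1 = true := by
  intro pre i j post t heq hpre i' hi'
  rw [heq] at hrun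
  obtain ⟨u, hpre', hrest⟩ := qrun_split hrun
  have htu : t = u := qrun_det hpre hpre'
  subst htu
  cases hrest with | cons hstep hpost =>
  obtain ⟨q, hq⟩ := qinv_run hpre' (qinv_empty S)
  have hq' : QInv _ (([0] ++ q) ++ [i]) := qinv_step hstep hq
  obtain ⟨r, hr⟩ := qinv_run hpost hq'
  set n := sf.length with hn
  set p : List ℕ := [0] ++ q with hp
  have hfull : (p ++ [i]) ++ r = List.range n := by
    refine sorted_full_eq_range hr.1 hr.2.1 fun k hk => ?_
    have hg : sf[k]? = some (sf[k]'hk) := List.getElem?_eq_getElem hk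
    have hacc := hall _ (List.getElem_mem hk)
    exact (hr.2.2 k _ hg).1.mp hacc
  have hlen : p.length < n := by
    have := congrArg List.length hfull
    simp at this
    omega
  have hfull' : p ++ (i :: r) = List.range n := by
    rw [List.append_assoc, List.singleton_append] at hfull; exact hfull
  have hii : i = p.length := by
    have h1 : (p ++ (i :: r))[p.length]? = some i := by
      rw [List.getElem?_append_right le_rfl]
      simp
    rw [hfull', List.getElem?_range hlen] at h1
    injection h1 with h1
    exact h1.symm
  have hpr : p = List.range p.length := by
    have := congrArg (List.take p.length) hfull'
    rw [List.take_left, List.take_range, min_eq_left hlen.le] at this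
    exact this
  have hi'p : i' ∈ p := by
    rw [hpr, List.mem_range]
    omega
  have hbd := hq.2.1 i' hi'p
  have hg : t[i']? = some (t[i']'hbd) := List.getElem?_eq_getElem hbd
  exact ⟨_, hg, (hq.2.2 i' _ hg).1.mpr hi'p⟩
end

section
/- Weak nested data class memory automata are closed under intersection: for any two WNDCMA A and B of level l over the same finite alphabet Σ and the same nested data set, there is a WNDCMA C with L(C) = L(A) ∩ L(B). -/
/-! ### Nested data sets of level `l`: the canonical tree of depth `l` in which
every node of level `< l` has infinitely many children.  A node is a list of
natural numbers (its path from the root); its level is its length; `pred`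
drops the last element. -/

def NDS (l : ℕ) : Type := {d : List ℕ // d.length ≤ l}

namespace NDS

/-- The level of a data value. -/
def level {l : ℕ} (d : NDS l) : ℕ := d.1.length

/-- The ancestor of `d` at level `j` (i.e. `pred^(level d - j) d`). -/
def anc {l : ℕ} (d : NDS l) (j : ℕ) : NDS l :=
  ⟨d.1.take j, le_trans (by rw [List.length_take]; exact min_le_right _ _) d.2⟩

/-- The level of a data value, as an element of `Fin (l+1)`. -/
def levelFin {l : ℕ} (d : NDS l) : Fin (l + 1) := ⟨d.1.length, Nat.lt_succ_of_le d.2⟩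

end NDS

/-! ### Weak nested data class memory automata (WNDCMA) of level `l` over an
alphabet. -/

/-- A weak nested data class memory automaton of level `l` over alphabet
`Alph`: a finite set of states, an initial state, final states, and for each
level `i ≤ l` a transition function taking the current state, the input letter
and the memory of the read data value and its ancestors
`(f(pred^i d), …, f(pred d), f(d))`, and returning a set of pairs of a new
state and new memory values for the data value and its ancestors. -/
structure WNDCMA (l : ℕ) (Alph : Type) where
  Q : Type
  finQ : Finite Q
  q0 : Q
  F : Set Q
  δ : (i : Fin (l + 1)) → Q → Alph → (Fin (i.1 + 1) → Option Q) →
      Set (Q × (Fin (i.1 + 1) → Q))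

/-- Update a class memory function on a data value and all of its ancestors. -/
noncomputable def updateCMF {l : ℕ} {Q : Type} (f : NDS l → Option Q) (d : NDS l)
    (t : Fin (d.1.length + 1) → Q) : NDS l → Option Q := fun e =>
  if h : e.1 <+: d.1 then some (t ⟨e.1.length, Nat.lt_succ_of_le h.length_le⟩)
  else f e

namespace WNDCMA

variable {l : ℕ} {Alph : Type}

/-- Runs of a WNDCMA on a data word, between configurations.  A configuration
consists of a state and a class memory function. -/
inductive Run (A : WNDCMA l Alph) :
    A.Q × (NDS l → Option A.Q) → List (Alph × NDS l) → A.Q × (NDS l → Option A.Q) → Prop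
  | nil (c) : Run A c [] c
  | cons {q f a q' w c'} {d : NDS l} {t : Fin (d.1.length + 1) → A.Q} :
      (q', t) ∈ A.δ d.levelFin q a (fun j => f (d.anc j.1)) →
      Run A (q', updateCMF f d t) w c' →
      Run A (q, f) ((a, d) :: w) c'

/-- The language of a WNDCMA: the data words on which some run from the initial
configuration ends in a final state. -/
def lang (A : WNDCMA l Alph) : Set (List (Alph × NDS l)) :=
  {w | ∃ q f, Run A (A.q0, fun _ => none) w (q, f) ∧ q ∈ A.F}

/-- An automaton is deterministic if every value of its transition function is
a singleton. -/
def Deterministic (A : WNDCMA l Alph) : Prop :=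
  ∀ (i : Fin (l + 1)) (q : A.Q) (a : Alph) (m : Fin (i.1 + 1) → Option A.Q),
    ∃ x, A.δ i q a m = {x}

end WNDCMA

section Product

variable {l : ℕ} {Alph : Type}

/-- Combine two class memory functions pointwise. -/
noncomputable def combineCMF {Q1 Q2 : Type} (f : NDS l → Option Q1)
    (g : NDS l → Option Q2) : NDS l → Option (Q1 × Q2) := fun e =>
  Option.map₂ Prod.mk (f e) (g e)

/-- The product automaton. -/
noncomputable def prodWNDCMA (A B : WNDCMA l Alph) : WNDCMA l Alph where
  Q := A.Q × B.Q
  finQ := by have := A.finQ; have := B.finQ; infer_instance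
  q0 := (A.q0, B.q0)
  F := {p | p.1 ∈ A.F ∧ p.2 ∈ B.F}
  δ := fun i q a m =>
    {x | (x.1.1, fun j => (x.2 j).1) ∈ A.δ i q.1 a (fun j => (m j).map Prod.fst) ∧
         (x.1.2, fun j => (x.2 j).2) ∈ B.δ i q.2 a (fun j => (m j).map Prod.snd)}

/-- Equal-support predicate. -/
def SameSupp {Q1 Q2 : Type} (f : NDS l → Option Q1) (g : NDS l → Option Q2) : Prop :=
  ∀ e, f e = none ↔ g e = none

lemma combineCMF_fst {Q1 Q2 : Type} {f : NDS l → Option Q1} {g : NDS l → Option Q2}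
    (h : SameSupp f g) (e : NDS l) : (combineCMF f g e).map Prod.fst = f e := by
  have := h e
  unfold combineCMF
  cases hf : f e <;> cases hg : g e <;> simp_all [Option.map₂]

lemma combineCMF_snd {Q1 Q2 : Type} {f : NDS l → Option Q1} {g : NDS l → Option Q2}
    (h : SameSupp f g) (e : NDS l) : (combineCMF f g e).map Prod.snd = g e := by
  have := h e
  unfold combineCMF
  cases hf : f e <;> cases hg : g e <;> simp_all [Option.map₂]

lemma updateCMF_combine {Q1 Q2 : Type} (f : NDS l → Option Q1) (g : NDS l → Option Q2)
    (d : NDS l) (t : Fin (d.1.length + 1) → Q1) (s : Fin (d.1.length + 1) → Q2) :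
    updateCMF (combineCMF f g) d (fun j => (t j, s j)) =
      combineCMF (updateCMF f d t) (updateCMF g d s) := by
  funext e
  unfold updateCMF combineCMF
  by_cases h : e.1 <+: d.1 <;> simp [h, Option.map₂]

lemma sameSupp_update {Q1 Q2 : Type} {f : NDS l → Option Q1} {g : NDS l → Option Q2}
    (h : SameSupp f g) (d : NDS l) (t : Fin (d.1.length + 1) → Q1)
    (s : Fin (d.1.length + 1) → Q2) :
    SameSupp (updateCMF f d t) (updateCMF g d s) := by
  intro e
  unfold updateCMF
  split <;> simp [h e]

/-- Forward direction: a run of the product yields runs of both components. -/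
lemma prod_run_forward {A B : WNDCMA l Alph} {w : List (Alph × NDS l)}
    {p : A.Q × B.Q} {f : NDS l → Option A.Q} {g : NDS l → Option B.Q}
    {c' : (prodWNDCMA A B).Q × (NDS l → Option (prodWNDCMA A B).Q)}
    (hsupp : SameSupp f g)
    (hrun : WNDCMA.Run (prodWNDCMA A B) (p, combineCMF f g) w c') :
    ∃ f' g', c' = ((c'.1.1, c'.1.2), combineCMF f' g') ∧ SameSupp f' g' ∧
      WNDCMA.Run A (p.1, f) w (c'.1.1, f') ∧ WNDCMA.Run B (p.2, g) w (c'.1.2, g') := by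
  generalize hc : ((p, combineCMF f g) : (prodWNDCMA A B).Q × (NDS l → Option (prodWNDCMA A B).Q)) = c at hrun
  induction hrun generalizing p f g with
  | nil c =>
    subst hc
    exact ⟨f, g, rfl, hsupp, WNDCMA.Run.nil _, WNDCMA.Run.nil _⟩
  | @cons q fc a q' w c' d t hδ hrest ih =>
    obtain ⟨hq, hf⟩ := Prod.mk.injEq .. ▸ hc
    subst hq
    subst hf
    obtain ⟨hA, hB⟩ := hδ
    have hmfst : (fun j : Fin (d.levelFin.1 + 1) => (combineCMF f g (d.anc j.1)).map Prod.fst)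
        = fun j => f (d.anc j.1) := funext fun j => combineCMF_fst hsupp _
    have hmsnd : (fun j : Fin (d.levelFin.1 + 1) => (combineCMF f g (d.anc j.1)).map Prod.snd)
        = fun j => g (d.anc j.1) := funext fun j => combineCMF_snd hsupp _
    rw [hmfst] at hA
    rw [hmsnd] at hB
    have hupd : updateCMF (combineCMF f g) d t =
        combineCMF (updateCMF f d (fun j => (t j).1)) (updateCMF g d (fun j => (t j).2)) :=
      updateCMF_combine f g d (fun j => (t j).1) (fun j => (t j).2)
    obtain ⟨f', g', hc', hs', hrA, hrB⟩ :=
      ih (p := q') (sameSupp_update hsupp d _ _) (by rw [← hupd]; rfl)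
    exact ⟨f', g', hc', hs', WNDCMA.Run.cons hA hrA, WNDCMA.Run.cons hB hrB⟩

/-- Backward direction. -/
lemma prod_run_backward {A B : WNDCMA l Alph} {w : List (Alph × NDS l)}
    {qa : A.Q} {qb : B.Q} {f f' : NDS l → Option A.Q} {g g' : NDS l → Option B.Q}
    {qa' : A.Q} {qb' : B.Q}
    (hsupp : SameSupp f g)
    (hA : WNDCMA.Run A (qa, f) w (qa', f'))
    (hB : WNDCMA.Run B (qb, g) w (qb', g')) :
    WNDCMA.Run (prodWNDCMA A B) ((qa, qb), combineCMF f g) w ((qa', qb'), combineCMF f' g') := by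
  induction w generalizing qa f qb g with
  | nil =>
    cases hA
    cases hB
    exact WNDCMA.Run.nil _
  | cons ad w ih =>
    obtain ⟨a, d⟩ := ad
    cases hA with
    | @cons _ _ _ qA' _ _ _ t hδA hrestA =>
      cases hB with
      | @cons _ _ _ qB' _ _ _ s hδB hrestB =>
        have hmfst : (fun j : Fin (d.levelFin.1 + 1) =>
            (combineCMF f g (d.anc j.1)).map Prod.fst)
            = fun j => f (d.anc j.1) := funext fun j => combineCMF_fst hsupp _
        have hmsnd : (fun j : Fin (d.levelFin.1 + 1) =>
            (combineCMF f g (d.anc j.1)).map Prod.snd)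
            = fun j => g (d.anc j.1) := funext fun j => combineCMF_snd hsupp _
        refine WNDCMA.Run.cons (q' := (qA', qB')) (t := fun j => (t j, s j)) ?_ ?_
        · constructor
          · rw [hmfst]; exact hδA
          · rw [hmsnd]; exact hδB
        · refine (congrArg (fun h : NDS l → Option (A.Q × B.Q) => WNDCMA.Run (prodWNDCMA A B)
            (((qA', qB') : (prodWNDCMA A B).Q), h) w (((qa', qb') : (prodWNDCMA A B).Q), combineCMF f' g'))
            (updateCMF_combine f g d t s)).mpr ?_
          exact ih (sameSupp_update hsupp d t s) hrestA hrestB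

end Product

/-- Weak nested data class memory automata are closed under
intersection: for any two WNDCMA of level `l` over the same finite alphabet and
the same nested data set there is a WNDCMA recognising the intersection of
their languages. -/
theorem wndcma_closed_under_intersection (l : ℕ) (Alph : Type) [Finite Alph]
    (A B : WNDCMA l Alph) :
    ∃ C : WNDCMA l Alph, C.lang = A.lang ∩ B.lang := by
  refine ⟨prodWNDCMA A B, ?_⟩
  ext w
  constructor
  · rintro ⟨q, f, hrun, hq1, hq2⟩
    have hrun' : WNDCMA.Run (prodWNDCMA A B)
        ((A.q0, B.q0), combineCMF (fun _ => (none : Option A.Q))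
          (fun _ => (none : Option B.Q))) w (q, f) := hrun
    obtain ⟨f', g', hc, hs, hA, hB⟩ := prod_run_forward
      (fun e => iff_of_true rfl rfl : SameSupp (fun _ : NDS l => (none : Option A.Q))
        (fun _ => (none : Option B.Q))) hrun'
    exact ⟨⟨q.1, f', hA, hq1⟩, ⟨q.2, g', hB, hq2⟩⟩
  · rintro ⟨⟨qa, f, hA, hqa⟩, ⟨qb, g, hB, hqb⟩⟩
    refine ⟨(qa, qb), combineCMF f g, ?_, hqa, hqb⟩
    exact prod_run_backward
      (fun e => iff_of_true rfl rfl : SameSupp (fun _ : NDS l => (none : Option A.Q))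
        (fun _ => (none : Option B.Q))) hA hB
end

section
/- No weak nested data class memory automaton over the one-letter alphabet {a} and a nested data set of level 1 recognises the language { (a,d₁)(a,d₂)…(a,dₙ)(a,dₙ)…(a,d₂)(a,d₁) : n ≥ 1 and d₁,…,dₙ are pairwise distinct level-1 data values }. -/
/-- The language `{ (a,d₁)…(a,dₙ)(a,dₙ)…(a,d₁) : n ≥ 1, the dᵢ pairwise
distinct level-1 data values }` over the one-letter alphabet. -/
def palindromeDataLang : Set (List (Unit × NDS 1)) :=
  {w | ∃ ds : List (NDS 1), ds ≠ [] ∧ ds.Nodup ∧ (∀ d ∈ ds, d.level = 1) ∧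
    w = (ds ++ ds.reverse).map fun d => (((), d) : Unit × NDS 1)}

namespace PalProof
open WNDCMA

/-- The level-1 data value `[k]`. -/
def dv (k : ℕ) : NDS 1 := ⟨[k], by simp⟩

lemma dv_injective : Function.Injective dv := by
  intro a b h
  have := congrArg Subtype.val h
  simpa [dv] using this

lemma dv_inj {a b : ℕ} : dv a = dv b ↔ a = b :=
  ⟨fun h => dv_injective h, fun h => h ▸ rfl⟩

attribute [local instance] Classical.propDecidable

/-- The transposition of the data values `dv i` and `dv j`. -/
noncomputable def sw (i j : ℕ) (d : NDS 1) : NDS 1 :=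
  if d = dv i then dv j else if d = dv j then dv i else d

lemma sw_sw (i j : ℕ) (d : NDS 1) : sw i j (sw i j d) = d := by
  unfold sw
  split_ifs with h1 h2 h3 h4 h5 h6 <;> simp_all

lemma sw_length (i j : ℕ) (d : NDS 1) : (sw i j d).1.length = d.1.length := by
  unfold sw
  split_ifs with h1 h2 <;> simp_all [dv]

lemma sw_root (i j : ℕ) : sw i j ⟨[], by simp⟩ = ⟨[], by simp⟩ := by
  unfold sw
  split_ifs with h1 h2
  · exact absurd (congrArg Subtype.val h1) (by simp [dv])
  · exact absurd (congrArg Subtype.val h2) (by simp [dv])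
  · exact if_neg h2

lemma sw_anc (i j : ℕ) (d : NDS 1) (k : ℕ) :
    (sw i j d).anc k = sw i j (d.anc k) := by
  have hroot : ∀ d : NDS 1, d.anc 0 = ⟨[], by simp⟩ := by
    intro d; simp [NDS.anc]; rfl
  have hfull : ∀ (d : NDS 1) (k : ℕ), k ≠ 0 → d.anc k = d := by
    intro d k hk
    rcases d with ⟨l, hl⟩
    apply Subtype.ext
    simp only [NDS.anc]
    interval_cases l' : l.length
    · have : l = [] := List.length_eq_zero_iff.mp l'
      simp [this]
    · exact List.take_of_length_le (by omega)
  rcases Nat.eq_zero_or_pos k with hk | hk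
  · subst hk
    rw [hroot, hroot, sw_root]
  · rw [hfull _ _ (by omega), hfull _ _ (by omega)]

lemma sw_levelFin (i j : ℕ) (d : NDS 1) : (sw i j d).levelFin = d.levelFin :=
  Fin.ext (sw_length i j d)

/-- Characterisation of the prefix relation in `NDS 1`. -/
lemma prefix_iff (e d : NDS 1) : e.1 <+: d.1 ↔ e.1 = [] ∨ e = d := by
  constructor
  · intro h
    by_cases he : e.1 = []
    · exact Or.inl he
    · right
      apply Subtype.ext
      apply List.IsPrefix.eq_of_length h
      have h1 : 1 ≤ e.1.length := by
        cases hE : e.1 with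
        | nil => exact absurd hE he
        | cons a l => simp
      have := h.length_le
      have := d.2
      have := e.2
      omega
  · rintro (h | rfl)
    · rw [h]; exact List.nil_prefix
    · exact List.prefix_refl _

lemma sw_eq_root_iff (i j : ℕ) (e : NDS 1) :
    (sw i j e).1 = [] ↔ e.1 = [] := by
  unfold sw
  split_ifs with h1 h2 <;> simp_all [dv]

lemma prefix_sw (i j : ℕ) (e d : NDS 1) :
    e.1 <+: (sw i j d).1 ↔ (sw i j e).1 <+: d.1 := by
  rw [prefix_iff, prefix_iff]
  constructor
  · rintro (h | rfl)
    · left; rwa [sw_eq_root_iff]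
    · right; exact sw_sw i j d
  · rintro (h | h)
    · left; rwa [sw_eq_root_iff] at h
    · right; rw [← h, sw_sw]

lemma updateCMF_sw {Q : Type} (i j : ℕ) (f : NDS 1 → Option Q) (d : NDS 1)
    (t : Fin (d.1.length + 1) → Q) :
    updateCMF (f ∘ sw i j) (sw i j d)
      (fun k => t (Fin.cast (by rw [sw_length]) k)) =
    (updateCMF f d t) ∘ sw i j := by
  funext x
  simp only [updateCMF, Function.comp]
  by_cases h : x.1 <+: (sw i j d).1
  · rw [dif_pos h, dif_pos ((prefix_sw i j x d).mp h)]
    congr 1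
    apply congrArg
    exact Fin.ext (by simp [sw_length])
  · rw [dif_neg h, dif_neg (fun hc => h ((prefix_sw i j x d).mpr hc))]

lemma delta_cast {l : ℕ} {Alph : Type} {A : WNDCMA l Alph} {i₁ i₂ : Fin (l + 1)}
    (h : i₂ = i₁) {q : A.Q} {a : Alph} {m : Fin (i₁.1 + 1) → Option A.Q}
    {qt : A.Q × (Fin (i₁.1 + 1) → A.Q)} (hm : qt ∈ A.δ i₁ q a m) :
    (qt.1, qt.2 ∘ Fin.cast (congrArg (fun x : Fin (l+1) => x.1 + 1) h)) ∈
      A.δ i₂ q a (m ∘ Fin.cast (congrArg (fun x : Fin (l+1) => x.1 + 1) h)) := by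
  subst h
  exact hm

lemma run_sw {A : WNDCMA 1 Unit} (i j : ℕ)
    {c c' : A.Q × (NDS 1 → Option A.Q)} {w : List (Unit × NDS 1)}
    (h : A.Run c w c') :
    A.Run (c.1, c.2 ∘ sw i j) (w.map fun p => (p.1, sw i j p.2))
      (c'.1, c'.2 ∘ sw i j) := by
  induction h with
  | nil c => exact Run.nil _
  | @cons q f a q' w c' d t hm hr ih =>
    have hl : (sw i j d).levelFin = d.levelFin := sw_levelFin i j d
    have hmem := delta_cast hl hm
    have hmem2 : ((q', t ∘ Fin.cast (congrArg (fun x : Fin 2 => x.1 + 1) hl)) ∈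
        A.δ (sw i j d).levelFin q a
          (fun k => (f ∘ sw i j) ((sw i j d).anc k.1))) := by
      have hmeq : (fun k : Fin ((sw i j d).levelFin.1 + 1) =>
          (f ∘ sw i j) ((sw i j d).anc k.1)) =
          ((fun k : Fin (d.1.length + 1) => f (d.anc k.1)) ∘
            Fin.cast (congrArg (fun x : Fin 2 => x.1 + 1) hl)) := by
        funext k
        simp only [Function.comp, Fin.cast]
        rw [sw_anc, sw_sw]
      rw [hmeq]
      exact hmem
    refine Run.cons (d := sw i j d)
      (t := t ∘ Fin.cast (congrArg (fun x : Fin 2 => x.1 + 1) hl)) hmem2 ?_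
    have hupd : updateCMF (f ∘ sw i j) (sw i j d)
        (t ∘ Fin.cast (congrArg (fun x : Fin 2 => x.1 + 1) hl)) =
        (updateCMF f d t) ∘ sw i j := updateCMF_sw i j f d t
    rw [hupd]
    exact ih

lemma run_split {l : ℕ} {Alph : Type} {A : WNDCMA l Alph}
    {u : List (Alph × NDS l)} :
    ∀ {c c'' : A.Q × (NDS l → Option A.Q)} {v : List (Alph × NDS l)},
    A.Run c (u ++ v) c'' → ∃ c', A.Run c u c' ∧ A.Run c' v c'' := by
  induction u with
  | nil => exact fun h => ⟨_, Run.nil _, h⟩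
  | cons p u ih =>
    intro c c'' v h
    obtain ⟨a, d⟩ := p
    cases h with
    | cons hm hr =>
      obtain ⟨c', h1, h2⟩ := ih hr
      exact ⟨c', Run.cons hm h1, h2⟩

lemma run_concat {l : ℕ} {Alph : Type} {A : WNDCMA l Alph}
    {u : List (Alph × NDS l)} :
    ∀ {c c' c'' : A.Q × (NDS l → Option A.Q)} {v : List (Alph × NDS l)},
    A.Run c u c' → A.Run c' v c'' → A.Run c (u ++ v) c'' := by
  induction u with
  | nil => intro c c' c'' v h1 h2; cases h1; exact h2
  | cons p u ih =>
    intro c c' c'' v h1 h2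
    obtain ⟨a, d⟩ := p
    cases h1 with
    | cons hm hr => exact Run.cons hm (ih hr h2)

end PalProof

/-- No weak nested data class memory automaton over the
one-letter alphabet and a nested data set of level 1 recognises the language
`{ (a,d₁)…(a,dₙ)(a,dₙ)…(a,d₁) }` with the `dᵢ` pairwise distinct level-1 data
values. -/
theorem wndcma_cannot_recognise_palindromeDataLang :
    ∀ A : WNDCMA 1 Unit, A.lang ≠ palindromeDataLang := by
  intro A hEq
  classical
  haveI : Finite A.Q := A.finQ
  haveI : Fintype A.Q := Fintype.ofFinite A.Q
  set n := Fintype.card A.Q + 2 with hn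
  set ds : List (NDS 1) := (List.range n).map PalProof.dv with hds
  have hlen_ds : ds.length = n := by simp [hds]
  have hnodup : ds.Nodup := List.Nodup.map PalProof.dv_injective List.nodup_range
  have hlev : ∀ d ∈ ds, d.level = 1 := by
    intro d hd
    rw [hds, List.mem_map] at hd
    obtain ⟨k, -, rfl⟩ := hd
    rfl
  have hw : ((ds ++ ds.reverse).map fun d => (((), d) : Unit × NDS 1))
      ∈ palindromeDataLang := by
    refine ⟨ds, ?_, hnodup, hlev, rfl⟩
    intro h
    rw [h] at hlen_ds
    simp [hn] at hlen_ds
  rw [← hEq] at hw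
  obtain ⟨qF, fF, hrun, hF⟩ := hw
  rw [List.map_append] at hrun
  obtain ⟨⟨q1, f1⟩, hrun1, hrun2⟩ := PalProof.run_split hrun
  obtain ⟨i', j', hne, hfeq⟩ :=
    Fintype.exists_ne_map_eq_of_card_lt
      (fun k : Fin n => f1 (PalProof.dv k.1))
      (by simp only [Fintype.card_fin, Fintype.card_option]; omega)
  have hij : i'.1 ≠ j'.1 := fun h => hne (Fin.ext h)
  have hf1 : f1 ∘ PalProof.sw i'.1 j'.1 = f1 := by
    funext x
    simp only [Function.comp, PalProof.sw]
    split_ifs with h1 h2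
    · rw [h1]; exact hfeq.symm
    · rw [h2]; exact hfeq
    · rfl
  have hrun2' := PalProof.run_sw i'.1 j'.1 hrun2
  simp only [hf1] at hrun2'
  have hrun' := PalProof.run_concat hrun1 hrun2'
  have hw' : ((ds.map fun d => (((), d) : Unit × NDS 1)) ++
      ((ds.reverse.map fun d => (((), d) : Unit × NDS 1)).map
        fun p => (p.1, PalProof.sw i'.1 j'.1 p.2))) ∈ A.lang :=
    ⟨qF, fF ∘ PalProof.sw i'.1 j'.1, hrun', hF⟩
  rw [hEq] at hw'
  obtain ⟨ds', hne', hnd', hlev', heq⟩ := hw'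
  have heq2 : ds ++ ds.reverse.map (PalProof.sw i'.1 j'.1) = ds' ++ ds'.reverse := by
    have hinj : Function.Injective (fun d : NDS 1 => (((), d) : Unit × NDS 1)) := by
      intro a b h
      exact congrArg Prod.snd h
    apply List.map_injective_iff.mpr hinj
    simpa [List.map_append, List.map_map, Function.comp_def] using heq
  have hlens : ds.length = ds'.length := by
    have := congrArg List.length heq2
    simp only [List.length_append, List.length_map, List.length_reverse] at this
    omega
  obtain ⟨hds', hrev⟩ := List.append_inj heq2 hlens
  rw [← hds'] at hrev
  -- `dv i'` occurs in `ds.reverse`; the map fixes it, contradiction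
  have hmem : PalProof.dv i'.1 ∈ ds.reverse := by
    rw [List.mem_reverse, hds, List.mem_map]
    exact ⟨i'.1, List.mem_range.mpr (by omega), rfl⟩
  obtain ⟨k, hk⟩ := List.mem_iff_get.mp hmem
  have h1 := congrArg (fun L : List (NDS 1) => L[k.1]?) hrev
  have h2 : ds.reverse[k.1]? = some (PalProof.dv i'.1) := by
    rw [List.getElem?_eq_getElem k.2, ← hk]
    simp [List.get_eq_getElem]
  simp only [List.getElem?_map, h2, Option.map_some] at h1
  have h3 : PalProof.sw i'.1 j'.1 (PalProof.dv i'.1) = PalProof.dv i'.1 :=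
    Option.some.inj h1
  rw [show PalProof.sw i'.1 j'.1 (PalProof.dv i'.1) = PalProof.dv j'.1 by
    simp [PalProof.sw]] at h3
  exact hij (PalProof.dv_inj.mp h3).symm
end
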